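/- For the continuous q-Hermite polynomials H_n(cos x | q) (satisfying the difference equation V(x)(H_n(cos(x-iγ)) - H_n(cos x)) + V*(x)(H_n(cos(x+iγ)) - H_n(cos x)) = (q^{-n}-1)H_n(cos x) with V(x) = ((1-e^{2ix})(1-qe^{2ix}))^{-1} and γ = log q), the three-term style structure gives e^{inx} ₂φ₀(q^{-n}, 0; —; q; q^n e^{-2ix}) as an explicit solution; equivalently, H_n(cos x|q) = Σ_{k=0}^n [(q;q)_n / ((q;q)_k (q;q)_{n-k})] e^{i(n-2k)x} satisfies the above difference equation. -/

import Mathlib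

open Finset

/-- The q-shifted factorial `(q;q)_m = ∏_{j=0}^{m-1} (1 - q·q^j)`. -/
noncomputable def qPoch (q : ℝ) (m : ℕ) : ℂ :=
  ∏ j ∈ Finset.range m, (1 - (q : ℂ) ^ (j + 1))

lemma qPoch_succ (q : ℝ) (m : ℕ) :
    qPoch q (m + 1) = qPoch q m * (1 - (q : ℂ) ^ (m + 1)) :=
  Finset.prod_range_succ _ m

lemma one_sub_pow_ne (q : ℝ) (hq0 : 0 < q) (hq1 : q < 1) (j : ℕ) :
    (1 : ℂ) - (q : ℂ) ^ (j + 1) ≠ 0 := by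
  rw [sub_ne_zero]
  intro h
  have h2 : (q : ℝ) ^ (j+1) = 1 := by
    have : ((q ^ (j+1) : ℝ) : ℂ) = 1 := by push_cast; rw [← h]
    exact_mod_cast this
  have : (q:ℝ) ^ (j+1) < 1 := pow_lt_one₀ hq0.le hq1 (Nat.succ_ne_zero j)
  linarith

lemma qPoch_ne_zero (q : ℝ) (hq0 : 0 < q) (hq1 : q < 1) (m : ℕ) :
    qPoch q m ≠ 0 := by
  rw [qPoch, Finset.prod_ne_zero_iff]
  exact fun j _ => one_sub_pow_ne q hq0 hq1 j

noncomputable def bb (q : ℝ) (n k : ℕ) : ℂ :=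
  if k ≤ n then (qPoch q k * qPoch q (n - k))⁻¹ else 0

noncomputable def uu (q : ℝ) (n k : ℕ) : ℂ := (q:ℂ)^n * ((q:ℂ)^(2*k))⁻¹

noncomputable def cc0 (q : ℝ) (n k : ℕ) : ℂ := (q:ℂ) * (((q:ℂ)^n)⁻¹ - uu q n k)

noncomputable def cc1 (q : ℝ) (n k : ℕ) : ℂ :=
  uu q n k - 1 - (((q:ℂ)^n)⁻¹ - 1) * (1 + (q:ℂ) + (q:ℂ)^2)

noncomputable def cc2 (q : ℝ) (n k : ℕ) : ℂ :=
  1 - (uu q n k)⁻¹ + (((q:ℂ)^n)⁻¹ - 1) * (1 + (q:ℂ) + (q:ℂ)^2)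

noncomputable def cc3 (q : ℝ) (n k : ℕ) : ℂ := -(q:ℂ) * (((q:ℂ)^n)⁻¹ - (uu q n k)⁻¹)

noncomputable def pv (q : ℝ) (n k : ℕ) : ℂ :=
  if k = 0 then 0 else bb q n (k-1) * cc0 q n (k-1)

lemma master' (q A D : ℂ) :
    q*(1-A)*(1-q*A)*(1-q^2*A) * (q*(1 - q^2*D^2))
  + q*((1-q*A)*(1-q^2*A)*(1-q*D)) * (D^2 - A*D - (1-A*D)*(1+q+q^2))
  + q*((1-q^2*A)*(1-D)*(1-q*D)) * (A*D - q^2*A^2 + (1-A*D)*(1+q+q^2))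
  + ((q-D)*(1-D)*(1-q*D)) * (-q*(1 - q^4*A^2)) = 0 := by
  ring

lemma hT1 (q : ℝ) (hq0 : 0 < q) (hq1 : q < 1) {n k : ℕ} (hk : k ≤ n) :
    qPoch q (k+2) * qPoch q (n+1-k) * bb q n k
      = (1 - (q:ℂ)*(q:ℂ)^k) * (1 - (q:ℂ)^2*(q:ℂ)^k) * (1 - (q:ℂ)*(q:ℂ)^(n-k)) := by
  rw [bb, if_pos hk, show n+1-k = (n-k)+1 from by omega]
  simp only [qPoch_succ]
  field_simp [qPoch_ne_zero q hq0 hq1]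
  ring

lemma hT2 (q : ℝ) (hq0 : 0 < q) (hq1 : q < 1) {n k : ℕ} (hk : k ≤ n) :
    qPoch q (k+2) * qPoch q (n+1-k) * bb q n (k+1)
      = (1 - (q:ℂ)^2*(q:ℂ)^k) * (1 - (q:ℂ)^(n-k)) * (1 - (q:ℂ)*(q:ℂ)^(n-k)) := by
  rcases eq_or_lt_of_le hk with h | h
  · subst h
    rw [bb, if_neg (by omega), mul_zero, show k - k = 0 from by omega, pow_zero]
    ring
  · obtain ⟨m, hm⟩ : ∃ m, n - k = m + 1 := ⟨n - k - 1, by omega⟩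
    rw [bb, if_pos (by omega : k+1 ≤ n), show n - (k+1) = m from by omega,
      show n+1-k = m+2 from by omega, hm]
    simp only [qPoch_succ]
    have e1 : (1:ℂ) - (q:ℂ)^(k+1) ≠ 0 := one_sub_pow_ne q hq0 hq1 k
    field_simp [qPoch_ne_zero q hq0 hq1 k, qPoch_ne_zero q hq0 hq1 m, e1]
    ring

lemma hT3 (q : ℝ) (hq0 : 0 < q) (hq1 : q < 1) {n k : ℕ} (hk : k ≤ n) :
    qPoch q (k+2) * qPoch q (n+1-k) * bb q n (k+2) * (q:ℂ)
      = ((q:ℂ) - (q:ℂ)^(n-k)) * (1 - (q:ℂ)^(n-k)) * (1 - (q:ℂ)*(q:ℂ)^(n-k)) := by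
  rcases lt_or_ge (n) (k+2) with h | h
  · rw [bb, if_neg (by omega), mul_zero, zero_mul]
    rcases eq_or_lt_of_le hk with h2 | h2
    · subst h2; rw [show k - k = 0 from by omega, pow_zero]; ring
    · rw [show n - k = 1 from by omega, pow_one]; ring
  · obtain ⟨m, hm⟩ : ∃ m, n - k = m + 2 := ⟨n - k - 2, by omega⟩
    rw [bb, if_pos (by omega : k+2 ≤ n), show n - (k+2) = m from by omega,
      show n+1-k = m+3 from by omega, hm, show m+3 = (m+2)+1 from rfl,
      show m+2 = (m+1)+1 from rfl]
    simp only [qPoch_succ]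
    have e1 : (1:ℂ) - (q:ℂ)^(k+1) ≠ 0 := one_sub_pow_ne q hq0 hq1 k
    have e2 : (1:ℂ) - (q:ℂ)^(k+1+1) ≠ 0 := one_sub_pow_ne q hq0 hq1 (k+1)
    field_simp [qPoch_ne_zero q hq0 hq1 k, qPoch_ne_zero q hq0 hq1 m, e1, e2]
    ring

lemma hT0 (q : ℝ) (hq0 : 0 < q) (hq1 : q < 1) {n k : ℕ} (hk : k ≤ n) :
    qPoch q (k+2) * qPoch q (n+1-k) * (q:ℂ) * ((q:ℂ)^k * (q:ℂ)^(n-k)) * pv q n k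
      = (q:ℂ)*(1-(q:ℂ)^k)*(1-(q:ℂ)*(q:ℂ)^k)*(1-(q:ℂ)^2*(q:ℂ)^k)
          * ((q:ℂ)*(1 - (q:ℂ)^2*((q:ℂ)^(n-k))^2)) := by
  have hq : (q:ℂ) ≠ 0 := by exact_mod_cast hq0.ne'
  rcases k with _ | j
  · rw [pv, if_pos rfl, mul_zero, pow_zero]; ring
  · have hj : j ≤ n := by omega
    obtain ⟨m, hm⟩ : ∃ m, n - j = m + 1 := ⟨n - j - 1, by omega⟩
    have hmk : n - (j+1) = m := by omega
    rw [pv, if_neg (Nat.succ_ne_zero j), show j + 1 - 1 = j from rfl,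
      bb, if_pos hj, cc0, uu, hm, hmk,
      show n + 1 - (j+1) = m + 1 from by omega,
      show j + 1 + 2 = ((j+1)+1)+1 from rfl,
      show (q:ℂ)^n = (q:ℂ)^j * (q:ℂ)^(m+1) from by rw [← pow_add]; congr 1; omega,
      show 2*j = j + j from by omega, pow_add]
    simp only [qPoch_succ]
    have em : (1:ℂ) - (q:ℂ)^(m+1) ≠ 0 := one_sub_pow_ne q hq0 hq1 m
    have hgj : (q:ℂ)^j ≠ 0 := pow_ne_zero _ hq
    have hgm : (q:ℂ)^(m+1) ≠ 0 := pow_ne_zero _ hq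
    field_simp [qPoch_ne_zero q hq0 hq1 j, qPoch_ne_zero q hq0 hq1 m, em, hgj, hgm, hq]
    ring

lemma hc1 (q : ℝ) (hq : (q:ℂ) ≠ 0) {n k : ℕ} (hk : k ≤ n) :
    (q:ℂ)^k * (q:ℂ)^(n-k) * cc1 q n k
      = ((q:ℂ)^(n-k))^2 - (q:ℂ)^k*(q:ℂ)^(n-k)
        - (1 - (q:ℂ)^k*(q:ℂ)^(n-k))*(1+(q:ℂ)+(q:ℂ)^2) := by
  rw [cc1, uu, show (q:ℂ)^n = (q:ℂ)^k * (q:ℂ)^(n-k) from by rw [← pow_add]; congr 1; omega,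
    show 2*k = k + k from by omega, pow_add]
  have hA : (q:ℂ)^k ≠ 0 := pow_ne_zero _ hq
  have hD : (q:ℂ)^(n-k) ≠ 0 := pow_ne_zero _ hq
  field_simp

lemma hc2 (q : ℝ) (hq : (q:ℂ) ≠ 0) {n k : ℕ} (hk : k ≤ n) :
    (q:ℂ)^k * (q:ℂ)^(n-k) * cc2 q n (k+1)
      = (q:ℂ)^k*(q:ℂ)^(n-k) - (q:ℂ)^2*((q:ℂ)^k)^2
        + (1 - (q:ℂ)^k*(q:ℂ)^(n-k))*(1+(q:ℂ)+(q:ℂ)^2) := by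
  rw [cc2, uu, show (q:ℂ)^n = (q:ℂ)^k * (q:ℂ)^(n-k) from by rw [← pow_add]; congr 1; omega,
    show 2*(k+1) = k + (k+2) from by omega, pow_add, pow_add]
  have hA : (q:ℂ)^k ≠ 0 := pow_ne_zero _ hq
  have hD : (q:ℂ)^(n-k) ≠ 0 := pow_ne_zero _ hq
  field_simp

lemma hc3 (q : ℝ) (hq : (q:ℂ) ≠ 0) {n k : ℕ} (hk : k ≤ n) :
    (q:ℂ)^k * (q:ℂ)^(n-k) * cc3 q n (k+2)
      = -(q:ℂ)*(1 - (q:ℂ)^4*((q:ℂ)^k)^2) := by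
  rw [cc3, uu, show (q:ℂ)^n = (q:ℂ)^k * (q:ℂ)^(n-k) from by rw [← pow_add]; congr 1; omega,
    show 2*(k+2) = k + (k+4) from by omega, pow_add, pow_add]
  have hA : (q:ℂ)^k ≠ 0 := pow_ne_zero _ hq
  have hD : (q:ℂ)^(n-k) ≠ 0 := pow_ne_zero _ hq
  field_simp

lemma rec_id (q : ℝ) (hq0 : 0 < q) (hq1 : q < 1) {n k : ℕ} (hk : k ≤ n) :
    bb q n k * cc1 q n k + pv q n k + bb q n (k+1) * cc2 q n (k+1)
      + bb q n (k+2) * cc3 q n (k+2) = 0 := by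
  have hq : (q:ℂ) ≠ 0 := by exact_mod_cast hq0.ne'
  have hA : (q:ℂ)^k ≠ 0 := pow_ne_zero _ hq
  have hD : (q:ℂ)^(n-k) ≠ 0 := pow_ne_zero _ hq
  have hP : qPoch q (k+2) * qPoch q (n+1-k) * (q:ℂ) * ((q:ℂ)^k * (q:ℂ)^(n-k)) ≠ 0 := by
    exact mul_ne_zero (mul_ne_zero (mul_ne_zero (qPoch_ne_zero q hq0 hq1 _)
      (qPoch_ne_zero q hq0 hq1 _)) hq) (mul_ne_zero hA hD)
  suffices h : qPoch q (k+2) * qPoch q (n+1-k) * (q:ℂ) * ((q:ℂ)^k * (q:ℂ)^(n-k)) *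
      (bb q n k * cc1 q n k + pv q n k + bb q n (k+1) * cc2 q n (k+1)
        + bb q n (k+2) * cc3 q n (k+2)) = 0 by
    exact (mul_eq_zero.mp h).resolve_left hP
  have t0 := hT0 q hq0 hq1 hk
  have t1 := hT1 q hq0 hq1 hk
  have t2 := hT2 q hq0 hq1 hk
  have t3 := hT3 q hq0 hq1 hk
  have c1' := hc1 q hq hk
  have c2' := hc2 q hq hk
  have c3' := hc3 q hq hk
  linear_combination master' q ((q:ℂ)^k) ((q:ℂ)^(n-k)) + t0
    + ((q:ℂ) * (((q:ℂ)^(n-k))^2 - (q:ℂ)^k*(q:ℂ)^(n-k)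
        - (1 - (q:ℂ)^k*(q:ℂ)^(n-k))*(1+(q:ℂ)+(q:ℂ)^2))) * t1
    + ((q:ℂ) * ((q:ℂ)^k*(q:ℂ)^(n-k) - (q:ℂ)^2*((q:ℂ)^k)^2
        + (1 - (q:ℂ)^k*(q:ℂ)^(n-k))*(1+(q:ℂ)+(q:ℂ)^2))) * t2
    + (-(q:ℂ)*(1 - (q:ℂ)^4*((q:ℂ)^k)^2)) * t3
    + (qPoch q (k+2) * qPoch q (n+1-k) * (q:ℂ) * bb q n k) * c1'
    + (qPoch q (k+2) * qPoch q (n+1-k) * (q:ℂ) * bb q n (k+1)) * c2'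
    + (qPoch q (k+2) * qPoch q (n+1-k) * (q:ℂ) * bb q n (k+2)) * c3'

noncomputable def Phi (q : ℝ) (n : ℕ) (z : ℂ) (k : ℕ) : ℂ :=
  qPoch q n * (-(pv q n k) * z^(n+1-k)
    + (bb q n k * cc2 q n k + bb q n (k+1) * cc3 q n (k+1)) * z^(n+2-k)
    + bb q n k * cc3 q n k * z^(n+3-k))

lemma htel (q : ℝ) (hq0 : 0 < q) (hq1 : q < 1) {n k : ℕ} (hk : k ≤ n) (z : ℂ) :
    qPoch q n * (bb q n k * z^(n-k) *
      (cc0 q n k + cc1 q n k * z + cc2 q n k * z^2 + cc3 q n k * z^3))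
      = Phi q n z k - Phi q n z (k+1) := by
  have hrec := rec_id q hq0 hq1 hk
  simp only [Phi]
  rw [show pv q n (k+1) = bb q n k * cc0 q n k from by
    rw [pv, if_neg (Nat.succ_ne_zero k), Nat.add_sub_cancel]]
  rw [show n+1-k = (n-k)+1 from by omega, show n+2-k = (n-k)+2 from by omega,
      show n+3-k = (n-k)+3 from by omega, show n+1-(k+1) = n-k from by omega,
      show n+2-(k+1) = (n-k)+1 from by omega, show n+3-(k+1) = (n-k)+2 from by omega]
  linear_combination (qPoch q n * (z^(n-k) * z)) * hrec

lemma cc3_zero (q : ℝ) (n : ℕ) : cc3 q n 0 = 0 := by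
  simp [cc3, uu]

lemma cc0_top (q : ℝ) (hq : (q:ℂ) ≠ 0) (n : ℕ) : cc0 q n n = 0 := by
  rw [cc0, uu, two_mul, pow_add]
  have h : (q:ℂ)^n ≠ 0 := pow_ne_zero _ hq
  field_simp
  ring

lemma bb_cc2_cc3 (q : ℝ) (hq0 : 0 < q) (hq1 : q < 1) (n : ℕ) :
    bb q n 0 * cc2 q n 0 + bb q n 1 * cc3 q n 1 = 0 := by
  have hq : (q:ℂ) ≠ 0 := by exact_mod_cast hq0.ne'
  rcases n with _ | m
  · have h2 : cc2 q 0 0 = 0 := by simp [cc2, uu]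
    have h3 : bb q 0 1 = 0 := by rw [bb, if_neg (by omega)]
    rw [h2, h3]; ring
  · rw [bb, if_pos (by omega : 0 ≤ m+1), bb, if_pos (by omega : 1 ≤ m+1),
      Nat.sub_zero, Nat.add_sub_cancel, cc2, cc3, uu, uu,
      show qPoch q 0 = 1 from rfl, show qPoch q 1 = 1 * (1 - (q:ℂ)^(0+1)) from qPoch_succ q 0,
      qPoch_succ q m]
    have e1 : (1:ℂ) - (q:ℂ)^(0+1) ≠ 0 := one_sub_pow_ne q hq0 hq1 0
    have e2 : (1:ℂ) - (q:ℂ)^(m+1) ≠ 0 := one_sub_pow_ne q hq0 hq1 m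
    have e3 : (q:ℂ)^(m+1) ≠ 0 := pow_ne_zero _ hq
    have e1' : (1:ℂ) - (q:ℂ) ≠ 0 := by simpa using e1
    field_simp [qPoch_ne_zero q hq0 hq1 m, e1, e1', e2, e3]
    ring

lemma phi_zero (q : ℝ) (hq0 : 0 < q) (hq1 : q < 1) (n : ℕ) (z : ℂ) :
    Phi q n z 0 = 0 := by
  rw [Phi, pv, if_pos rfl, cc3_zero, bb_cc2_cc3 q hq0 hq1]
  ring

lemma phi_top (q : ℝ) (hq0 : 0 < q) (hq1 : q < 1) (n : ℕ) (z : ℂ) :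
    Phi q n z (n+1) = 0 := by
  have hq : (q:ℂ) ≠ 0 := by exact_mod_cast hq0.ne'
  rw [Phi, pv, if_neg (Nat.succ_ne_zero n), Nat.add_sub_cancel, cc0_top q hq,
    show bb q n (n+1) = 0 from by rw [bb, if_neg (by omega)],
    show bb q n (n+1+1) = 0 from by rw [bb, if_neg (by omega)]]
  ring

lemma star (q : ℝ) (hq0 : 0 < q) (hq1 : q < 1) (n : ℕ) (z : ℂ) :
    ∑ k ∈ Finset.range (n+1), qPoch q n * (bb q n k * z^(n-k) *
      (cc0 q n k + cc1 q n k * z + cc2 q n k * z^2 + cc3 q n k * z^3)) = 0 := by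
  have h : ∀ k ∈ Finset.range (n+1),
      qPoch q n * (bb q n k * z^(n-k) *
        (cc0 q n k + cc1 q n k * z + cc2 q n k * z^2 + cc3 q n k * z^3))
      = Phi q n z k - Phi q n z (k+1) := fun k hk =>
    htel q hq0 hq1 (Nat.lt_succ_iff.mp (Finset.mem_range.mp hk)) z
  rw [Finset.sum_congr rfl h, Finset.sum_range_sub' (Phi q n z) (n+1),
    phi_zero q hq0 hq1, phi_top q hq0 hq1, sub_zero]

/-- The continuous q-Hermite polynomial
`H_n(cos x | q) = Σ_{k=0}^n (q;q)_n / ((q;q)_k (q;q)_{n-k}) e^{i(n-2k)x}`,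
viewed as a function of `x ∈ ℂ`. -/
noncomputable def cqHermite (q : ℝ) (n : ℕ) (x : ℂ) : ℂ :=
  ∑ k ∈ Finset.range (n + 1),
    qPoch q n / (qPoch q k * qPoch q (n - k)) *
      Complex.exp (Complex.I * ((n : ℂ) - 2 * (k : ℂ)) * x)

/-- The continuous q-Hermite polynomials satisfy the difference equation
`V(x)(H_n(cos(x-iγ)) - H_n(cos x)) + V*(x)(H_n(cos(x+iγ)) - H_n(cos x))
  = (q^{-n}-1) H_n(cos x)` with `V(x) = ((1-e^{2ix})(1-qe^{2ix}))⁻¹` and `γ = log q`. -/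
theorem cqHermite_difference_eq (q : ℝ) (hq0 : 0 < q) (hq1 : q < 1) (n : ℕ) (x : ℂ)
    (h1 : Complex.exp (2 * Complex.I * x) ≠ 1)
    (h2 : (q : ℂ) * Complex.exp (2 * Complex.I * x) ≠ 1)
    (h3 : Complex.exp (-(2 * Complex.I * x)) ≠ 1)
    (h4 : (q : ℂ) * Complex.exp (-(2 * Complex.I * x)) ≠ 1) :
    (1 / ((1 - Complex.exp (2 * Complex.I * x)) *
          (1 - (q : ℂ) * Complex.exp (2 * Complex.I * x)))) *
        (cqHermite q n (x - Complex.I * (Real.log q : ℂ)) - cqHermite q n x) +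
      (1 / ((1 - Complex.exp (-(2 * Complex.I * x))) *
          (1 - (q : ℂ) * Complex.exp (-(2 * Complex.I * x))))) *
        (cqHermite q n (x + Complex.I * (Real.log q : ℂ)) - cqHermite q n x) =
      ((q : ℂ) ^ (-(n : ℤ)) - 1) * cqHermite q n x := by
  have hq : (q:ℂ) ≠ 0 := by exact_mod_cast hq0.ne'
  set L : ℂ := (Real.log q : ℂ) with hL
  set z : ℂ := Complex.exp (2 * Complex.I * x) with hzdef
  have hz0 : z ≠ 0 := Complex.exp_ne_zero _
  have hexpL : Complex.exp L = (q:ℂ) := by rw [hL, ← Complex.ofReal_exp, Real.exp_log hq0]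
  have hzint : ∀ m : ℤ, Complex.exp ((m:ℂ) * L) = (q:ℂ)^m := fun m => by
    rw [Complex.exp_int_mul, hexpL]
  have hzpow : ∀ k : ℕ, (q:ℂ)^(((n:ℤ) - 2*(k:ℤ))) = uu q n k := by
    intro k
    rw [zpow_sub₀ hq, show ((2:ℤ)*(k:ℤ)) = ((2*k:ℕ):ℤ) from by push_cast; ring,
      zpow_natCast, zpow_natCast, uu, div_eq_mul_inv]
  have hsub : ∀ k : ℕ, Complex.exp (Complex.I * ((n:ℂ) - 2*(k:ℂ)) * (x - Complex.I * L))
      = uu q n k * Complex.exp (Complex.I * ((n:ℂ) - 2*(k:ℂ)) * x) := by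
    intro k
    have harg : Complex.I * ((n:ℂ) - 2*(k:ℂ)) * (x - Complex.I * L)
        = Complex.I * ((n:ℂ) - 2*(k:ℂ)) * x + ((((n:ℤ) - 2*(k:ℤ)) : ℤ) : ℂ) * L := by
      push_cast
      linear_combination (-(((n:ℂ) - 2*(k:ℂ))*L)) * Complex.I_mul_I
    rw [harg, Complex.exp_add, hzint, hzpow]
    ring
  have hadd : ∀ k : ℕ, Complex.exp (Complex.I * ((n:ℂ) - 2*(k:ℂ)) * (x + Complex.I * L))
      = (uu q n k)⁻¹ * Complex.exp (Complex.I * ((n:ℂ) - 2*(k:ℂ)) * x) := by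
    intro k
    have harg : Complex.I * ((n:ℂ) - 2*(k:ℂ)) * (x + Complex.I * L)
        = Complex.I * ((n:ℂ) - 2*(k:ℂ)) * x + (((-((n:ℤ) - 2*(k:ℤ))) : ℤ) : ℂ) * L := by
      push_cast
      linear_combination ((((n:ℂ) - 2*(k:ℂ))*L)) * Complex.I_mul_I
    rw [harg, Complex.exp_add, hzint, zpow_neg, hzpow]
    ring
  have hE : ∀ k : ℕ, k ≤ n → Complex.exp (Complex.I * ((n:ℂ) - 2*(k:ℂ)) * x)
      = Complex.exp (-(Complex.I * (n:ℂ) * x)) * z^(n-k) := by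
    intro k hk
    rw [hzdef, ← Complex.exp_nat_mul, ← Complex.exp_add]
    congr 1
    have : ((n - k : ℕ) : ℂ) = (n:ℂ) - (k:ℂ) := by
      push_cast [Nat.cast_sub hk]; ring
    rw [this]; ring
  set E := Complex.exp (-(Complex.I * (n:ℂ) * x)) with hEdef
  have hE0 : E ≠ 0 := Complex.exp_ne_zero _
  set SH := ∑ k ∈ Finset.range (n+1),
    qPoch q n / (qPoch q k * qPoch q (n-k)) * z^(n-k) with hSH
  set SA := ∑ k ∈ Finset.range (n+1),
    qPoch q n / (qPoch q k * qPoch q (n-k)) * uu q n k * z^(n-k) with hSA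
  set SB := ∑ k ∈ Finset.range (n+1),
    qPoch q n / (qPoch q k * qPoch q (n-k)) * (uu q n k)⁻¹ * z^(n-k) with hSB
  have hH : cqHermite q n x = E * SH := by
    rw [cqHermite, hSH, Finset.mul_sum]
    refine Finset.sum_congr rfl fun k hk => ?_
    rw [hE k (Nat.lt_succ_iff.mp (Finset.mem_range.mp hk))]
    ring
  have hHm : cqHermite q n (x - Complex.I * L) = E * SA := by
    rw [cqHermite, hSA, Finset.mul_sum]
    refine Finset.sum_congr rfl fun k hk => ?_
    rw [hsub k, hE k (Nat.lt_succ_iff.mp (Finset.mem_range.mp hk))]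
    ring
  have hHp : cqHermite q n (x + Complex.I * L) = E * SB := by
    rw [cqHermite, hSB, Finset.mul_sum]
    refine Finset.sum_congr rfl fun k hk => ?_
    rw [hadd k, hE k (Nat.lt_succ_iff.mp (Finset.mem_range.mp hk))]
    ring
  have hstar : (z - (q:ℂ)) * (SA - SH) - z^2*(1-(q:ℂ)*z)*(SB - SH)
      - (((q:ℂ)^n)⁻¹ - 1)*(1-z)*(1-(q:ℂ)*z)*(z-(q:ℂ))*SH = 0 := by
    have hsum := star q hq0 hq1 n z
    rw [← hsum, hSA, hSB, hSH]
    rw [← Finset.sum_sub_distrib, ← Finset.sum_sub_distrib, Finset.mul_sum,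
      Finset.mul_sum, Finset.mul_sum, ← Finset.sum_sub_distrib, ← Finset.sum_sub_distrib]
    refine Finset.sum_congr rfl fun k hk => ?_
    have hk' : k ≤ n := Nat.lt_succ_iff.mp (Finset.mem_range.mp hk)
    rw [show qPoch q n / (qPoch q k * qPoch q (n-k)) = qPoch q n * bb q n k from by
      rw [bb, if_pos hk', div_eq_mul_inv], cc0, cc1, cc2, cc3]
    ring
  rw [Complex.exp_neg] at h3 h4 ⊢
  rw [← hzdef] at h3 h4 ⊢
  have h1z : (1:ℂ) - z ≠ 0 := sub_ne_zero.mpr (Ne.symm h1)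
  have h2z : (1:ℂ) - (q:ℂ)*z ≠ 0 := sub_ne_zero.mpr fun h => h2 h.symm
  have h3z : (1:ℂ) - z⁻¹ ≠ 0 := sub_ne_zero.mpr (Ne.symm h3)
  have h4z : (1:ℂ) - (q:ℂ)*z⁻¹ ≠ 0 := sub_ne_zero.mpr fun h => h4 h.symm
  have hzq : z - (q:ℂ) ≠ 0 := by
    intro h
    apply h4
    rw [show z = (q:ℂ) from by linear_combination h]
    field_simp
  have hD : (1-z)*(1-(q:ℂ)*z)*(z-(q:ℂ)) ≠ 0 := mul_ne_zero (mul_ne_zero h1z h2z) hzq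
  have f1 : (1:ℂ)/((1-z)*(1-(q:ℂ)*z)) = (z-(q:ℂ))/((1-z)*(1-(q:ℂ)*z)*(z-(q:ℂ))) := by
    rw [div_eq_div_iff (mul_ne_zero h1z h2z) hD]; ring
  have f2 : (1:ℂ)/((1-z⁻¹)*(1-(q:ℂ)*z⁻¹))
      = (-(z^2*(1-(q:ℂ)*z)))/((1-z)*(1-(q:ℂ)*z)*(z-(q:ℂ))) := by
    rw [div_eq_div_iff (mul_ne_zero h3z h4z) hD]
    field_simp
    ring
  rw [hH, hHm, hHp, show ((q:ℂ))^(-(n:ℤ)) = ((q:ℂ)^n)⁻¹ from by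
    rw [zpow_neg, zpow_natCast], f1, f2, div_mul_eq_mul_div, div_mul_eq_mul_div,
    ← add_div, div_eq_iff hD]
  linear_combination E * hstar
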